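/- arXiv:1807.11092 — 2 statements merged into one kernel-verified Lean document; each statement's English description precedes it below -/
import Mathlib

section
/- Let λ₁, λ₂ : ℕ → ℂ be sequences and K ≥ 1 a real number such that ∑_{1 ≤ n ≤ Z} |λ₁(n)|² ≤ K·Z and ∑_{1 ≤ n ≤ Z} |λ₂(n)|² ≤ K·Z for every real Z ≥ 1. Let c be a positive integer and a, b integers with gcd(a, c) = gcd(b, c) = 1, and let X, Y ≥ 1 be real numbers. Then ∑ |λ₁(n)|·|λ₂(m)|, where the sum runs over pairs of positive integers n ≤ X, m ≤ Y with a·m ≡ b·n (mod c), is at most K·√(X·(Y/c + 1))·√(Y·(X/c + 1)). -/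
open Complex Real

lemma card_filter_mod_le (c M : ℕ) (hc : 0 < c) (Q : ℕ → Prop) [DecidablePred Q]
    (hQ : ∀ m₁ m₂, Q m₁ → Q m₂ → m₁ % c = m₂ % c) :
    ((Finset.Icc 1 M).filter Q).card ≤ M / c + 1 := by
  have := Finset.card_le_card_of_injOn (fun m => m / c)
    (s := (Finset.Icc 1 M).filter Q) (t := Finset.range (M / c + 1))
    (fun m hm => by
      simp only [Finset.mem_coe, Finset.mem_filter, Finset.mem_Icc] at hm
      simp only [Finset.mem_coe, Finset.mem_range, Nat.lt_succ_iff]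
      exact Nat.div_le_div_right hm.1.2)
    (fun m₁ h₁ m₂ h₂ h => by
      simp only [Finset.mem_coe, Finset.mem_filter, Finset.mem_Icc] at h₁ h₂
      have hmod : m₁ % c = m₂ % c := hQ m₁ m₂ h₁.2 h₂.2
      have e1 := Nat.div_add_mod m₁ c
      have e2 := Nat.div_add_mod m₂ c
      have h' : m₁ / c = m₂ / c := h
      rw [h'] at e1
      omega)
  simpa using this

lemma modeq_of_mul_modeq {c : ℕ} {a : ℤ} (ha : Int.gcd a c = 1) {m₁ m₂ : ℕ} {t : ℤ}
    (h₁ : a * m₁ ≡ t [ZMOD (c : ℤ)]) (h₂ : a * m₂ ≡ t [ZMOD (c : ℤ)]) :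
    m₁ % c = m₂ % c := by
  have h : a * (m₁ : ℤ) ≡ a * (m₂ : ℤ) [ZMOD (c : ℤ)] := h₁.trans h₂.symm
  have hd : (c : ℤ) ∣ a * ((m₂ : ℤ) - m₁) := by
    have := Int.ModEq.dvd h
    rw [show a * (m₂:ℤ) - a * m₁ = a * ((m₂:ℤ) - m₁) by ring] at this
    exact this
  have hcop : Int.gcd (c : ℤ) a = 1 := by rw [Int.gcd_comm]; exact ha
  have hd2 : (c : ℤ) ∣ ((m₂ : ℤ) - m₁) :=
    Int.dvd_of_dvd_mul_right_of_gcd_one hd hcop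
  have : (m₁ : ℤ) ≡ (m₂ : ℤ) [ZMOD (c : ℤ)] := Int.modEq_iff_dvd.mpr hd2
  exact Int.natCast_modEq_iff.mp this

/-- If `λ₁, λ₂` satisfy the averaged second-moment bound `∑_{n ≤ Z} |λᵢ(n)|² ≤ K·Z`, then
for `(a,c) = (b,c) = 1` the sum of `|λ₁(n)|·|λ₂(m)|` over `n ≤ X`, `m ≤ Y` with
`a·m ≡ b·n (mod c)` is at most `K·√(X(Y/c+1))·√(Y(X/c+1))`. -/
theorem sum_coeffs_in_arithmetic_progression
    (lam₁ lam₂ : ℕ → ℂ) (K : ℝ) (hK : 1 ≤ K)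
    (h₁ : ∀ Z : ℝ, 1 ≤ Z → ∑ n ∈ Finset.Icc 1 ⌊Z⌋₊, ‖lam₁ n‖ ^ 2 ≤ K * Z)
    (h₂ : ∀ Z : ℝ, 1 ≤ Z → ∑ n ∈ Finset.Icc 1 ⌊Z⌋₊, ‖lam₂ n‖ ^ 2 ≤ K * Z)
    (c : ℕ) (hc : 0 < c) (a b : ℤ) (ha : Int.gcd a c = 1) (hb : Int.gcd b c = 1)
    (X Y : ℝ) (hX : 1 ≤ X) (hY : 1 ≤ Y) :
    ∑ n ∈ Finset.Icc 1 ⌊X⌋₊, ∑ m ∈ Finset.Icc 1 ⌊Y⌋₊,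
        (if a * (m : ℤ) ≡ b * (n : ℤ) [ZMOD (c : ℤ)] then ‖lam₁ n‖ * ‖lam₂ m‖ else 0)
      ≤ K * Real.sqrt (X * (Y / c + 1)) * Real.sqrt (Y * (X / c + 1)) := by
  set N := ⌊X⌋₊ with hN
  set M := ⌊Y⌋₊ with hM
  have hc' : (0:ℝ) < c := by exact_mod_cast hc
  -- real cast counting bounds
  have hcountY : ∀ n : ℕ,
      (((Finset.Icc 1 M).filter (fun m : ℕ => a * (m:ℤ) ≡ b * (n:ℤ) [ZMOD (c:ℤ)])).card : ℝ)
        ≤ Y / c + 1 := by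
    intro n
    have h1 : ((Finset.Icc 1 M).filter
        (fun m : ℕ => a * (m:ℤ) ≡ b * (n:ℤ) [ZMOD (c:ℤ)])).card ≤ M / c + 1 :=
      card_filter_mod_le c M hc _ (fun m₁ m₂ q₁ q₂ => modeq_of_mul_modeq ha q₁ q₂)
    calc (((Finset.Icc 1 M).filter _).card : ℝ) ≤ ((M / c + 1 : ℕ) : ℝ) := by exact_mod_cast h1
      _ = ((M / c : ℕ) : ℝ) + 1 := by push_cast; ring
      _ ≤ (M : ℝ) / c + 1 := by
          have := Nat.cast_div_le (α := ℝ) (m := M) (n := c)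
          linarith
      _ ≤ Y / c + 1 := by
          have hMY : (M : ℝ) ≤ Y := Nat.floor_le (by linarith)
          gcongr
  have hcountX : ∀ m : ℕ,
      (((Finset.Icc 1 N).filter (fun n : ℕ => a * (m:ℤ) ≡ b * (n:ℤ) [ZMOD (c:ℤ)])).card : ℝ)
        ≤ X / c + 1 := by
    intro m
    have h1 : ((Finset.Icc 1 N).filter
        (fun n : ℕ => a * (m:ℤ) ≡ b * (n:ℤ) [ZMOD (c:ℤ)])).card ≤ N / c + 1 :=
      card_filter_mod_le c N hc _ (fun n₁ n₂ q₁ q₂ => modeq_of_mul_modeq hb q₁.symm q₂.symm)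
    calc (((Finset.Icc 1 N).filter _).card : ℝ) ≤ ((N / c + 1 : ℕ) : ℝ) := by exact_mod_cast h1
      _ = ((N / c : ℕ) : ℝ) + 1 := by push_cast; ring
      _ ≤ (N : ℝ) / c + 1 := by
          have := Nat.cast_div_le (α := ℝ) (m := N) (n := c)
          linarith
      _ ≤ X / c + 1 := by
          have hNX : (N : ℝ) ≤ X := Nat.floor_le (by linarith)
          gcongr
  set s := (Finset.Icc 1 N) ×ˢ (Finset.Icc 1 M) with hs
  set f : ℕ × ℕ → ℝ := fun p => if a * (p.2:ℤ) ≡ b * (p.1:ℤ) [ZMOD (c:ℤ)] then ‖lam₁ p.1‖ else 0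
  set g : ℕ × ℕ → ℝ := fun p => if a * (p.2:ℤ) ≡ b * (p.1:ℤ) [ZMOD (c:ℤ)] then ‖lam₂ p.2‖ else 0
  have hS : ∑ n ∈ Finset.Icc 1 N, ∑ m ∈ Finset.Icc 1 M,
      (if a * (m : ℤ) ≡ b * (n : ℤ) [ZMOD (c : ℤ)] then ‖lam₁ n‖ * ‖lam₂ m‖ else 0)
      = ∑ p ∈ s, f p * g p := by
    rw [hs, Finset.sum_product]
    refine Finset.sum_congr rfl fun n _ => Finset.sum_congr rfl fun m _ => ?_
    simp only [f, g]
    split <;> simp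
  -- bound on A = ∑ f², B = ∑ g²
  have hA : ∑ p ∈ s, f p ^ 2 ≤ K * (X * (Y / c + 1)) := by
    rw [hs, Finset.sum_product]
    have key : ∀ n ∈ Finset.Icc 1 N, ∑ m ∈ Finset.Icc 1 M, f (n, m) ^ 2
        ≤ (Y / c + 1) * ‖lam₁ n‖ ^ 2 := by
      intro n _
      have : ∑ m ∈ Finset.Icc 1 M, f (n, m) ^ 2
          = (((Finset.Icc 1 M).filter
              (fun m : ℕ => a * (m:ℤ) ≡ b * (n:ℤ) [ZMOD (c:ℤ)])).card : ℝ) * ‖lam₁ n‖ ^ 2 := by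
        rw [show ∑ m ∈ Finset.Icc 1 M, f (n, m) ^ 2
            = ∑ m ∈ Finset.Icc 1 M,
              (if a * (m:ℤ) ≡ b * (n:ℤ) [ZMOD (c:ℤ)] then ‖lam₁ n‖ ^ 2 else 0) from
          Finset.sum_congr rfl fun m _ => by simp only [f]; split <;> simp]
        rw [← Finset.sum_filter, Finset.sum_const, nsmul_eq_mul]
      rw [this]
      have h2 : (0:ℝ) ≤ ‖lam₁ n‖ ^ 2 := sq_nonneg _
      exact mul_le_mul_of_nonneg_right (hcountY n) h2
    calc ∑ n ∈ Finset.Icc 1 N, ∑ m ∈ Finset.Icc 1 M, f (n, m) ^ 2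
        ≤ ∑ n ∈ Finset.Icc 1 N, (Y / c + 1) * ‖lam₁ n‖ ^ 2 := Finset.sum_le_sum key
      _ = (Y / c + 1) * ∑ n ∈ Finset.Icc 1 N, ‖lam₁ n‖ ^ 2 := by rw [Finset.mul_sum]
      _ ≤ (Y / c + 1) * (K * X) := by
          have hpos : (0:ℝ) ≤ Y / c + 1 := by positivity
          exact mul_le_mul_of_nonneg_left (h₁ X hX) hpos
      _ = K * (X * (Y / c + 1)) := by ring
  have hB : ∑ p ∈ s, g p ^ 2 ≤ K * (Y * (X / c + 1)) := by
    rw [hs, Finset.sum_product_right]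
    have key : ∀ m ∈ Finset.Icc 1 M, ∑ n ∈ Finset.Icc 1 N, g (n, m) ^ 2
        ≤ (X / c + 1) * ‖lam₂ m‖ ^ 2 := by
      intro m _
      have : ∑ n ∈ Finset.Icc 1 N, g (n, m) ^ 2
          = (((Finset.Icc 1 N).filter
              (fun n : ℕ => a * (m:ℤ) ≡ b * (n:ℤ) [ZMOD (c:ℤ)])).card : ℝ) * ‖lam₂ m‖ ^ 2 := by
        rw [show ∑ n ∈ Finset.Icc 1 N, g (n, m) ^ 2
            = ∑ n ∈ Finset.Icc 1 N,
              (if a * (m:ℤ) ≡ b * (n:ℤ) [ZMOD (c:ℤ)] then ‖lam₂ m‖ ^ 2 else 0) from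
          Finset.sum_congr rfl fun n _ => by simp only [g]; split <;> simp]
        rw [← Finset.sum_filter, Finset.sum_const, nsmul_eq_mul]
      rw [this]
      exact mul_le_mul_of_nonneg_right (hcountX m) (sq_nonneg _)
    calc ∑ m ∈ Finset.Icc 1 M, ∑ n ∈ Finset.Icc 1 N, g (n, m) ^ 2
        ≤ ∑ m ∈ Finset.Icc 1 M, (X / c + 1) * ‖lam₂ m‖ ^ 2 := Finset.sum_le_sum key
      _ = (X / c + 1) * ∑ m ∈ Finset.Icc 1 M, ‖lam₂ m‖ ^ 2 := by rw [Finset.mul_sum]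
      _ ≤ (X / c + 1) * (K * Y) := by
          have hpos : (0:ℝ) ≤ X / c + 1 := by positivity
          exact mul_le_mul_of_nonneg_left (h₂ Y hY) hpos
      _ = K * (Y * (X / c + 1)) := by ring
  rw [hS]
  have hCS : (∑ p ∈ s, f p * g p) ^ 2 ≤ (∑ p ∈ s, f p ^ 2) * ∑ p ∈ s, g p ^ 2 :=
    Finset.sum_mul_sq_le_sq_mul_sq s f g
  have hSnn : 0 ≤ ∑ p ∈ s, f p * g p := by
    refine Finset.sum_nonneg fun p _ => mul_nonneg ?_ ?_ <;>
      · simp only [f, g]; split <;> positivity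
  have hK0 : (0:ℝ) ≤ K := by linarith
  calc ∑ p ∈ s, f p * g p
      = Real.sqrt ((∑ p ∈ s, f p * g p) ^ 2) := (Real.sqrt_sq hSnn).symm
    _ ≤ Real.sqrt ((∑ p ∈ s, f p ^ 2) * ∑ p ∈ s, g p ^ 2) := Real.sqrt_le_sqrt hCS
    _ ≤ Real.sqrt ((K * (X * (Y / c + 1))) * (K * (Y * (X / c + 1)))) := by
        apply Real.sqrt_le_sqrt
        have hAnn : 0 ≤ ∑ p ∈ s, f p ^ 2 := Finset.sum_nonneg fun p _ => sq_nonneg _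
        have hBnn : 0 ≤ ∑ p ∈ s, g p ^ 2 := Finset.sum_nonneg fun p _ => sq_nonneg _
        have hB' : (0:ℝ) ≤ K * (Y * (X / c + 1)) := by positivity
        exact mul_le_mul hA hB hBnn (by positivity)
    _ = K * Real.sqrt (X * (Y / c + 1)) * Real.sqrt (Y * (X / c + 1)) := by
        rw [show (K * (X * (Y / c + 1))) * (K * (Y * (X / c + 1)))
            = (K * K) * ((X * (Y / c + 1)) * (Y * (X / c + 1))) by ring]
        rw [Real.sqrt_mul (by positivity), Real.sqrt_mul_self hK0,
          Real.sqrt_mul (by positivity)]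
        ring
end

section
/- There is an absolute constant C > 0 with the following property. Let λ₁, λ₂ : ℕ → ℂ be sequences and K ≥ 1 a real number such that ∑_{1 ≤ n ≤ Z} |λ₁(n)|² ≤ K·Z and ∑_{1 ≤ n ≤ Z} |λ₂(n)|² ≤ K·Z for every real Z ≥ 1. Let c be a positive integer, a, b integers with gcd(a, c) = gcd(b, c) = 1, let X, Y ≥ 1 be real, and let u, v be reals with 0 ≤ u ≤ 1/2 and 0 ≤ v ≤ 1/2. Then ∑ |λ₁(n)|·n^{−u}·|λ₂(m)|·m^{−v}, summed over pairs of positive integers n ≤ X, m ≤ Y with a·m ≡ b·n (mod c), is at most C·K·(1 + log X)·(1 + log Y)·(X^{1−u}·Y^{1−v}/c)·(1 + √(c/X) + √(c/Y) + c/√(X·Y)). -/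
open Complex Real

private lemma tele_log (N : ℕ) (hN : 1 ≤ N) :
    ∑ j ∈ Finset.Ico 1 N, (1:ℝ)/((j:ℝ)+1) ≤ Real.log N := by
  induction N with
  | zero => omega
  | succ n ih =>
    rcases Nat.lt_or_ge 1 (n+1) with h1 | h1
    · have hn : 1 ≤ n := by omega
      have hn0 : (0:ℝ) < n := by exact_mod_cast hn
      rw [Finset.sum_Ico_succ_top hn]
      have h2 : (1:ℝ)/((n:ℝ)+1) ≤ Real.log ((n:ℝ)+1) - Real.log n := by
        set t : ℝ := 1/((n:ℝ)+1) with ht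
        have hw : (0:ℝ) < (n:ℝ)+1 := by linarith
        have h1t : 0 < 1 - t := by
          rw [ht, sub_pos, div_lt_one hw]; linarith
        have he : 0 < Real.exp t := Real.exp_pos t
        have hmul : (1 - t) * Real.exp t ≤ 1 := by
          have h4 := Real.add_one_le_exp (-t)
          rw [Real.exp_neg] at h4
          calc (1-t) * Real.exp t ≤ (Real.exp t)⁻¹ * Real.exp t := by
                apply mul_le_mul_of_nonneg_right _ he.le; linarith
            _ = 1 := inv_mul_cancel₀ he.ne'
        have h3 : Real.exp t ≤ ((n:ℝ)+1)/n := by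
          rw [le_div_iff₀ hn0]
          have e1 : (1 - t) * ((n:ℝ)+1) = n := by
            rw [ht]; field_simp; ring
          nlinarith
        have h5 : t ≤ Real.log (((n:ℝ)+1)/n) := by
          rw [Real.le_log_iff_exp_le (by positivity)]
          exact h3
        rwa [Real.log_div (by linarith) hn0.ne'] at h5
      have h6 := ih hn
      push_cast
      linarith
    · have : n = 0 := by omega
      subst this
      simp

private lemma abel_id (a : ℕ → ℝ) : ∀ N : ℕ, 1 ≤ N →
    ∑ n ∈ Finset.Icc 1 N, a n / n =
      (∑ n ∈ Finset.Icc 1 N, a n) / N +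
      ∑ j ∈ Finset.Ico 1 N, ((1:ℝ)/(j:ℝ) - 1/((j:ℝ)+1)) * ∑ n ∈ Finset.Icc 1 j, a n := by
  intro N
  induction N with
  | zero => omega
  | succ n ih =>
    intro _
    rcases Nat.lt_or_ge 1 (n+1) with h1 | h1
    · have hn : 1 ≤ n := by omega
      have hn0 : (0:ℝ) < n := by exact_mod_cast hn
      rw [Finset.sum_Icc_succ_top (by omega : 1 ≤ n+1),
          Finset.sum_Icc_succ_top (by omega : 1 ≤ n+1),
          Finset.sum_Ico_succ_top hn, ih hn]
      set S := ∑ k ∈ Finset.Icc 1 n, a k with hS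
      set T := ∑ j ∈ Finset.Ico 1 n, ((1:ℝ)/(j:ℝ) - 1/((j:ℝ)+1)) * ∑ k ∈ Finset.Icc 1 j, a k with hT
      push_cast
      have h2 : ((n:ℝ)+1) ≠ 0 := by positivity
      field_simp
      ring
    · have : n = 0 := by omega
      subst this
      norm_num

private lemma sum_div_le (a : ℕ → ℝ) (K : ℝ) (hK0 : 0 ≤ K)
    (hK : ∀ M : ℕ, ∑ n ∈ Finset.Icc 1 M, a n ≤ K * M)
    (N : ℕ) (hN : 1 ≤ N) :
    ∑ n ∈ Finset.Icc 1 N, a n / n ≤ K * (1 + Real.log N) := by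
  rw [abel_id a N hN]
  have hN0 : (0:ℝ) < N := by exact_mod_cast hN
  have h1 : (∑ n ∈ Finset.Icc 1 N, a n)/N ≤ K := by
    rw [div_le_iff₀ hN0]; exact hK N
  have h2 : ∑ j ∈ Finset.Ico 1 N, ((1:ℝ)/(j:ℝ) - 1/((j:ℝ)+1)) * ∑ n ∈ Finset.Icc 1 j, a n
      ≤ ∑ j ∈ Finset.Ico 1 N, K * (1/((j:ℝ)+1)) := by
    apply Finset.sum_le_sum
    intro j hj
    have hj1 : 1 ≤ j := (Finset.mem_Ico.mp hj).1
    have hj0 : (0:ℝ) < j := by exact_mod_cast hj1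
    have hd : (0:ℝ) ≤ 1/(j:ℝ) - 1/((j:ℝ)+1) := by
      rw [sub_nonneg]
      apply div_le_div_of_nonneg_left (by norm_num) hj0 (by linarith)
    calc ((1:ℝ)/(j:ℝ) - 1/((j:ℝ)+1)) * ∑ n ∈ Finset.Icc 1 j, a n
        ≤ ((1:ℝ)/(j:ℝ) - 1/((j:ℝ)+1)) * (K * j) := mul_le_mul_of_nonneg_left (hK j) hd
      _ = K * (1/((j:ℝ)+1)) := by field_simp; ring
  have h3 : ∑ j ∈ Finset.Ico 1 N, K * (1/((j:ℝ)+1)) ≤ K * Real.log N := by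
    rw [← Finset.mul_sum]
    exact mul_le_mul_of_nonneg_left (tele_log N hN) hK0
  linarith

private lemma card_le_of_dvd_sub (c N : ℕ) (hc : 0 < c) (s : Finset ℕ)
    (hs : s ⊆ Finset.Icc 1 N)
    (hd : ∀ m₁ ∈ s, ∀ m₂ ∈ s, (c:ℤ) ∣ (m₁:ℤ) - (m₂:ℤ)) :
    s.card ≤ N / c + 1 := by
  have key : ∀ m₁ ∈ s, ∀ m₂ ∈ s, m₁ < m₂ → m₁ / c < m₂ / c := by
    intro m₁ h₁ m₂ h₂ hlt
    have hdvd : (c:ℤ) ∣ ((m₂ - m₁ : ℕ) : ℤ) := by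
      rw [Nat.cast_sub hlt.le]; exact hd m₂ h₂ m₁ h₁
    have hdvd2 : c ∣ m₂ - m₁ := Int.natCast_dvd_natCast.mp hdvd
    have hge : m₁ + c ≤ m₂ := by
      have := Nat.le_of_dvd (by omega) hdvd2; omega
    have : m₁ / c + 1 ≤ m₂ / c := by
      rw [← Nat.add_div_right m₁ hc]; exact Nat.div_le_div_right hge
    omega
  have : s.card ≤ (Finset.range (N/c + 1)).card := by
    apply Finset.card_le_card_of_injOn (fun m => m / c)
    · intro m hm
      simp only [Finset.mem_coe, Finset.mem_range]
      have := (Finset.mem_Icc.mp (hs hm)).2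
      exact Nat.lt_succ_of_le (Nat.div_le_div_right this)
    · intro m₁ h₁ m₂ h₂ heq
      rcases lt_trichotomy m₁ m₂ with h|h|h
      · exact absurd heq (Nat.ne_of_lt (key _ h₁ _ h₂ h))
      · exact h
      · exact absurd heq.symm (Nat.ne_of_lt (key _ h₂ _ h₁ h))
  simpa using this

private lemma sqrt_add_one_le (t : ℝ) (ht : 0 ≤ t) : Real.sqrt (t+1) ≤ Real.sqrt t + 1 := by
  have h := Real.sqrt_le_sqrt
    (show t+1 ≤ (Real.sqrt t+1)^2 by nlinarith [Real.sq_sqrt ht, Real.sqrt_nonneg t])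
  rwa [Real.sqrt_sq (by positivity)] at h

private lemma sqrt_le_self' (t : ℝ) (ht : 1 ≤ t) : Real.sqrt t ≤ t := by
  have h := Real.sqrt_le_sqrt (show t ≤ t^2 by nlinarith)
  rwa [Real.sqrt_sq (by linarith)] at h

private lemma final_id (X Y c u v : ℝ) (hX : 0 < X) (hY : 0 < Y) (hc : 0 < c) :
    X^((1:ℝ)/2-u) * Y^((1:ℝ)/2-v) * ((Real.sqrt (X/c)+1) * (Real.sqrt (Y/c)+1))
      = (X^(1-u) * Y^(1-v) / c) *
        (1 + Real.sqrt (c/X) + Real.sqrt (c/Y) + c / Real.sqrt (X*Y)) := by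
  have e1 : X^(1-u) = X^((1:ℝ)/2-u) * Real.sqrt X := by
    rw [Real.sqrt_eq_rpow, ← Real.rpow_add hX]; ring_nf
  have e2 : Y^(1-v) = Y^((1:ℝ)/2-v) * Real.sqrt Y := by
    rw [Real.sqrt_eq_rpow, ← Real.rpow_add hY]; ring_nf
  rw [Real.sqrt_div hX.le, Real.sqrt_div hY.le, Real.sqrt_div hc.le X, Real.sqrt_div hc.le Y,
    Real.sqrt_mul hX.le, e1, e2]
  set sc := Real.sqrt c with hscdef
  have hsc : sc^2 = c := Real.sq_sqrt hc.le
  have hsc0 : 0 < sc := Real.sqrt_pos.mpr hc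
  have hsx0 : 0 < Real.sqrt X := Real.sqrt_pos.mpr hX
  have hsy0 : 0 < Real.sqrt Y := Real.sqrt_pos.mpr hY
  rw [← hsc]
  field_simp
  ring

private lemma pack (K sk L₁ L₂ B₁ B₂ A₁ A₂ : ℝ) (hsk : sk * sk = K) :
    ((A₁+1) * (B₁ * (sk * L₁))) * ((A₂+1) * (B₂ * (sk * L₂)))
      = K * (L₁*L₂) * (B₁*B₂*((A₂+1)*(A₁+1))) := by
  rw [← hsk]
  ring

private lemma amgm (w : ℝ) (hw : 0 < w) (x y : ℝ) : x*y ≤ w/2*x^2 + w⁻¹/2*y^2 := by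
  have e : w/2*x^2 + w⁻¹/2*y^2 - x*y = (w*x - y)^2/(2*w) := by
    field_simp
    ring
  nlinarith [div_nonneg (sq_nonneg (w*x-y)) (by linarith : (0:ℝ) ≤ 2*w)]

private lemma combine_pq (p q : ℝ) (hp : 0 < p) (hq : 0 < q) :
    (q/p)/2*(p^2) + (q/p)⁻¹/2*(q^2) = p*q := by
  rw [inv_div]
  field_simp
  ring

set_option maxHeartbeats 2000000 in
/-- Weighted version: there exists an absolute constant `C > 0` such that, under the
averaged second-moment bound on `λ₁, λ₂`, for `(a,c) = (b,c) = 1` and `0 ≤ u, v ≤ 1/2`,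
the sum of `|λ₁(n)| n^{-u} · |λ₂(m)| m^{-v}` over `n ≤ X`, `m ≤ Y` with
`a·m ≡ b·n (mod c)` is at most
`C·K·(1+log X)(1+log Y)·(X^{1-u} Y^{1-v}/c)·(1 + √(c/X) + √(c/Y) + c/√(XY))`. -/
theorem sum_weighted_coeffs_in_arithmetic_progression :
    ∃ C : ℝ, 0 < C ∧
      ∀ (lam₁ lam₂ : ℕ → ℂ) (K : ℝ), 1 ≤ K →
        (∀ Z : ℝ, 1 ≤ Z → ∑ n ∈ Finset.Icc 1 ⌊Z⌋₊, ‖lam₁ n‖ ^ 2 ≤ K * Z) →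
        (∀ Z : ℝ, 1 ≤ Z → ∑ n ∈ Finset.Icc 1 ⌊Z⌋₊, ‖lam₂ n‖ ^ 2 ≤ K * Z) →
        ∀ (c : ℕ), 0 < c → ∀ (a b : ℤ), Int.gcd a c = 1 → Int.gcd b c = 1 →
        ∀ (X Y : ℝ), 1 ≤ X → 1 ≤ Y →
        ∀ (u v : ℝ), 0 ≤ u → u ≤ 1 / 2 → 0 ≤ v → v ≤ 1 / 2 →
          ∑ n ∈ Finset.Icc 1 ⌊X⌋₊, ∑ m ∈ Finset.Icc 1 ⌊Y⌋₊,
              (if a * (m : ℤ) ≡ b * (n : ℤ) [ZMOD (c : ℤ)] then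
                ‖lam₁ n‖ * (n : ℝ) ^ (-u) * (‖lam₂ m‖ * (m : ℝ) ^ (-v)) else 0)
            ≤ C * K * (1 + Real.log X) * (1 + Real.log Y) *
              (X ^ (1 - u) * Y ^ (1 - v) / c) *
              (1 + Real.sqrt (c / X) + Real.sqrt (c / Y) + c / Real.sqrt (X * Y)) := by
  refine ⟨4, by norm_num, ?_⟩
  intro lam₁ lam₂ K hK h₁ h₂ c hc a b hac hbc X Y hX hY u v hu hu2 hv hv2
  have hX0 : (0:ℝ) < X := by linarith
  have hY0 : (0:ℝ) < Y := by linarith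
  have hc0 : (0:ℝ) < (c:ℝ) := by exact_mod_cast hc
  have hK0 : (0:ℝ) ≤ K := by linarith
  set N₁ := ⌊X⌋₊ with hN₁def
  set N₂ := ⌊Y⌋₊ with hN₂def
  have hN₁1 : 1 ≤ N₁ := Nat.le_floor (by exact_mod_cast hX)
  have hN₂1 : 1 ≤ N₂ := Nat.le_floor (by exact_mod_cast hY)
  have hN₁X : (N₁:ℝ) ≤ X := Nat.floor_le hX0.le
  have hN₂Y : (N₂:ℝ) ≤ Y := Nat.floor_le hY0.le
  have hlogX : 0 ≤ Real.log X := Real.log_nonneg hX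
  have hlogY : 0 ≤ Real.log Y := Real.log_nonneg hY
  -- second-moment with 1/n weights
  have hA : ∑ n ∈ Finset.Icc 1 N₁, ‖lam₁ n‖^2 / n ≤ K * (1 + Real.log X) := by
    have hms : ∀ M : ℕ, ∑ n ∈ Finset.Icc 1 M, ‖lam₁ n‖^2 ≤ K * M := by
      intro M
      rcases Nat.eq_zero_or_pos M with h|h
      · subst h; simp
      · have := h₁ M (by exact_mod_cast h)
        rwa [Nat.floor_natCast] at this
    refine (sum_div_le (fun n => ‖lam₁ n‖^2) K hK0 hms N₁ hN₁1).trans ?_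
    have hl : Real.log N₁ ≤ Real.log X := by
      apply Real.log_le_log (by exact_mod_cast hN₁1) hN₁X
    nlinarith
  have hB : ∑ m ∈ Finset.Icc 1 N₂, ‖lam₂ m‖^2 / m ≤ K * (1 + Real.log Y) := by
    have hms : ∀ M : ℕ, ∑ n ∈ Finset.Icc 1 M, ‖lam₂ n‖^2 ≤ K * M := by
      intro M
      rcases Nat.eq_zero_or_pos M with h|h
      · subst h; simp
      · have := h₂ M (by exact_mod_cast h)
        rwa [Nat.floor_natCast] at this
    refine (sum_div_le (fun n => ‖lam₂ n‖^2) K hK0 hms N₂ hN₂1).trans ?_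
    have hl : Real.log N₂ ≤ Real.log Y := by
      apply Real.log_le_log (by exact_mod_cast hN₂1) hN₂Y
    nlinarith
  -- weighted square sums
  have hsum1 : ∑ n ∈ Finset.Icc 1 N₁, (‖lam₁ n‖ * (n:ℝ)^(-u))^2
      ≤ X^(1-2*u) * (K*(1+Real.log X)) := by
    have hpt : ∀ n ∈ Finset.Icc 1 N₁,
        (‖lam₁ n‖ * (n:ℝ)^(-u))^2 ≤ X^(1-2*u) * (‖lam₁ n‖^2 / n) := by
      intro n hn
      obtain ⟨hn1, hn2⟩ := Finset.mem_Icc.mp hn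
      have hn0 : (0:ℝ) < n := by exact_mod_cast hn1
      have hnX : (n:ℝ) ≤ X := le_trans (by exact_mod_cast hn2) hN₁X
      have e1 : ((n:ℝ)^(-u))^2 = (n:ℝ)^(1-2*u) / n := by
        rw [← Real.rpow_natCast ((n:ℝ)^(-u)) 2, ← Real.rpow_mul hn0.le,
          show -u*(2:ℕ) = (1-2*u) + (-1) by push_cast; ring,
          Real.rpow_add hn0, Real.rpow_neg_one, div_eq_mul_inv]
      rw [mul_pow, e1]
      have e2 : (n:ℝ)^(1-2*u) ≤ X^(1-2*u) := Real.rpow_le_rpow hn0.le hnX (by linarith)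
      calc ‖lam₁ n‖^2 * ((n:ℝ)^(1-2*u)/n) ≤ ‖lam₁ n‖^2 * (X^(1-2*u)/n) := by
            apply mul_le_mul_of_nonneg_left _ (sq_nonneg _)
            gcongr
        _ = X^(1-2*u) * (‖lam₁ n‖^2 / n) := by ring
    calc ∑ n ∈ Finset.Icc 1 N₁, (‖lam₁ n‖ * (n:ℝ)^(-u))^2
        ≤ ∑ n ∈ Finset.Icc 1 N₁, X^(1-2*u) * (‖lam₁ n‖^2/n) := Finset.sum_le_sum hpt
      _ = X^(1-2*u) * ∑ n ∈ Finset.Icc 1 N₁, ‖lam₁ n‖^2/n := (Finset.mul_sum _ _ _).symm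
      _ ≤ X^(1-2*u) * (K*(1+Real.log X)) := by
          apply mul_le_mul_of_nonneg_left hA (by positivity)
  have hsum2 : ∑ m ∈ Finset.Icc 1 N₂, (‖lam₂ m‖ * (m:ℝ)^(-v))^2
      ≤ Y^(1-2*v) * (K*(1+Real.log Y)) := by
    have hpt : ∀ m ∈ Finset.Icc 1 N₂,
        (‖lam₂ m‖ * (m:ℝ)^(-v))^2 ≤ Y^(1-2*v) * (‖lam₂ m‖^2 / m) := by
      intro m hm
      obtain ⟨hm1, hm2⟩ := Finset.mem_Icc.mp hm
      have hm0 : (0:ℝ) < m := by exact_mod_cast hm1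
      have hmY : (m:ℝ) ≤ Y := le_trans (by exact_mod_cast hm2) hN₂Y
      have e1 : ((m:ℝ)^(-v))^2 = (m:ℝ)^(1-2*v) / m := by
        rw [← Real.rpow_natCast ((m:ℝ)^(-v)) 2, ← Real.rpow_mul hm0.le,
          show -v*(2:ℕ) = (1-2*v) + (-1) by push_cast; ring,
          Real.rpow_add hm0, Real.rpow_neg_one, div_eq_mul_inv]
      rw [mul_pow, e1]
      have e2 : (m:ℝ)^(1-2*v) ≤ Y^(1-2*v) := Real.rpow_le_rpow hm0.le hmY (by linarith)
      calc ‖lam₂ m‖^2 * ((m:ℝ)^(1-2*v)/m) ≤ ‖lam₂ m‖^2 * (Y^(1-2*v)/m) := by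
            apply mul_le_mul_of_nonneg_left _ (sq_nonneg _)
            gcongr
        _ = Y^(1-2*v) * (‖lam₂ m‖^2 / m) := by ring
    calc ∑ m ∈ Finset.Icc 1 N₂, (‖lam₂ m‖ * (m:ℝ)^(-v))^2
        ≤ ∑ m ∈ Finset.Icc 1 N₂, Y^(1-2*v) * (‖lam₂ m‖^2/m) := Finset.sum_le_sum hpt
      _ = Y^(1-2*v) * ∑ m ∈ Finset.Icc 1 N₂, ‖lam₂ m‖^2/m := (Finset.mul_sum _ _ _).symm
      _ ≤ Y^(1-2*v) * (K*(1+Real.log Y)) := by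
          apply mul_le_mul_of_nonneg_left hB (by positivity)
  -- counting
  have hcop_a : IsCoprime (c:ℤ) a := (Int.isCoprime_iff_gcd_eq_one.mpr hac).symm
  have hcop_b : IsCoprime (c:ℤ) b := (Int.isCoprime_iff_gcd_eq_one.mpr hbc).symm
  have hcnt₁ : ∀ n : ℕ,
      (((Finset.Icc 1 N₂).filter
          (fun m : ℕ => a * (m:ℤ) ≡ b * (n:ℤ) [ZMOD (c:ℤ)])).card : ℝ) ≤ Y/(c:ℝ) + 1 := by
    intro n
    set s := (Finset.Icc 1 N₂).filter
        (fun m : ℕ => a * (m:ℤ) ≡ b * (n:ℤ) [ZMOD (c:ℤ)]) with hsdef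
    have key : ∀ m₁ ∈ s, ∀ m₂ ∈ s, (c:ℤ) ∣ (m₁:ℤ) - (m₂:ℤ) := by
      intro m₁ hm₁ m₂ hm₂
      have e₁ := (Finset.mem_filter.mp hm₁).2
      have e₂ := (Finset.mem_filter.mp hm₂).2
      have e3 : a * (m₁:ℤ) ≡ a * (m₂:ℤ) [ZMOD (c:ℤ)] := e₁.trans e₂.symm
      have e4 : (c:ℤ) ∣ a * (m₂:ℤ) - a * (m₁:ℤ) := Int.ModEq.dvd e3
      have e5 : (c:ℤ) ∣ a * ((m₂:ℤ) - (m₁:ℤ)) := by rw [mul_sub]; exact e4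
      have e6 : (c:ℤ) ∣ (m₂:ℤ) - (m₁:ℤ) := hcop_a.dvd_of_dvd_mul_left e5
      have e7 : (m₁:ℤ) - (m₂:ℤ) = -(((m₂:ℤ) - (m₁:ℤ))) := by ring
      rw [e7]
      exact dvd_neg.mpr e6
    have h := card_le_of_dvd_sub c N₂ hc s (hsdef ▸ Finset.filter_subset _ _) key
    calc ((s.card) : ℝ)
        ≤ ((N₂/c + 1 : ℕ) : ℝ) := by exact_mod_cast h
      _ = ((N₂/c : ℕ):ℝ) + 1 := by push_cast; ring
      _ ≤ (N₂:ℝ)/(c:ℝ) + 1 := by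
          have := Nat.cast_div_le (α := ℝ) (m := N₂) (n := c); linarith
      _ ≤ Y/(c:ℝ) + 1 := by
          have : (N₂:ℝ)/(c:ℝ) ≤ Y/(c:ℝ) := by gcongr
          linarith
  have hcnt₂ : ∀ m : ℕ,
      (((Finset.Icc 1 N₁).filter
          (fun n : ℕ => a * (m:ℤ) ≡ b * (n:ℤ) [ZMOD (c:ℤ)])).card : ℝ) ≤ X/(c:ℝ) + 1 := by
    intro m
    set s := (Finset.Icc 1 N₁).filter
        (fun n : ℕ => a * (m:ℤ) ≡ b * (n:ℤ) [ZMOD (c:ℤ)]) with hsdef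
    have key : ∀ n₁ ∈ s, ∀ n₂ ∈ s, (c:ℤ) ∣ (n₁:ℤ) - (n₂:ℤ) := by
      intro n₁ hn₁ n₂ hn₂
      have e₁ := (Finset.mem_filter.mp hn₁).2
      have e₂ := (Finset.mem_filter.mp hn₂).2
      have e3 : b * (n₁:ℤ) ≡ b * (n₂:ℤ) [ZMOD (c:ℤ)] := e₁.symm.trans e₂
      have e4 : (c:ℤ) ∣ b * (n₂:ℤ) - b * (n₁:ℤ) := Int.ModEq.dvd e3
      have e5 : (c:ℤ) ∣ b * ((n₂:ℤ) - (n₁:ℤ)) := by rw [mul_sub]; exact e4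
      have e6 : (c:ℤ) ∣ (n₂:ℤ) - (n₁:ℤ) := hcop_b.dvd_of_dvd_mul_left e5
      have e7 : (n₁:ℤ) - (n₂:ℤ) = -(((n₂:ℤ) - (n₁:ℤ))) := by ring
      rw [e7]
      exact dvd_neg.mpr e6
    have h := card_le_of_dvd_sub c N₁ hc s (hsdef ▸ Finset.filter_subset _ _) key
    calc ((s.card) : ℝ)
        ≤ ((N₁/c + 1 : ℕ) : ℝ) := by exact_mod_cast h
      _ = ((N₁/c : ℕ):ℝ) + 1 := by push_cast; ring
      _ ≤ (N₁:ℝ)/(c:ℝ) + 1 := by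
          have := Nat.cast_div_le (α := ℝ) (m := N₁) (n := c); linarith
      _ ≤ X/(c:ℝ) + 1 := by
          have : (N₁:ℝ)/(c:ℝ) ≤ X/(c:ℝ) := by gcongr
          linarith
  -- positivity facts
  have hKp : (0:ℝ) < K := by linarith
  have h1pX : (0:ℝ) < 1 + Real.log X := by linarith
  have h1pY : (0:ℝ) < 1 + Real.log Y := by linarith
  have hXp : (0:ℝ) < X^(1-2*u) := Real.rpow_pos_of_pos hX0 _
  have hYp : (0:ℝ) < Y^(1-2*v) := Real.rpow_pos_of_pos hY0 _
  have hfr1 : (0:ℝ) < Y/(c:ℝ)+1 := by positivity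
  have hfr2 : (0:ℝ) < X/(c:ℝ)+1 := by positivity
  -- main quantities
  set Q₁ := (Y/(c:ℝ)+1) * (X^(1-2*u) * (K*(1+Real.log X))) with hQ₁def
  set Q₂ := (X/(c:ℝ)+1) * (Y^(1-2*v) * (K*(1+Real.log Y))) with hQ₂def
  have hQ₁0 : 0 < Q₁ := mul_pos hfr1 (mul_pos hXp (mul_pos hKp h1pX))
  have hQ₂0 : 0 < Q₂ := mul_pos hfr2 (mul_pos hYp (mul_pos hKp h1pY))
  set p := Real.sqrt Q₁ with hpdef
  set q := Real.sqrt Q₂ with hqdef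
  have hp0 : 0 < p := Real.sqrt_pos.mpr hQ₁0
  have hq0 : 0 < q := Real.sqrt_pos.mpr hQ₂0
  set w := q / p with hwdef
  have hw0 : 0 < w := div_pos hq0 hp0
  set T₁ := ∑ n ∈ Finset.Icc 1 N₁, ∑ m ∈ Finset.Icc 1 N₂,
      (if a * (m : ℤ) ≡ b * (n : ℤ) [ZMOD (c : ℤ)] then
        (‖lam₁ n‖ * (n:ℝ)^(-u))^2 else 0) with hT₁def
  set T₂ := ∑ n ∈ Finset.Icc 1 N₁, ∑ m ∈ Finset.Icc 1 N₂,
      (if a * (m : ℤ) ≡ b * (n : ℤ) [ZMOD (c : ℤ)] then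
        (‖lam₂ m‖ * (m:ℝ)^(-v))^2 else 0) with hT₂def
  have key : ∀ x y : ℝ, x*y ≤ w/2*x^2 + w⁻¹/2*y^2 := amgm w hw0
  have step1 : ∑ n ∈ Finset.Icc 1 N₁, ∑ m ∈ Finset.Icc 1 N₂,
      (if a * (m : ℤ) ≡ b * (n : ℤ) [ZMOD (c : ℤ)] then
        ‖lam₁ n‖ * (n : ℝ) ^ (-u) * (‖lam₂ m‖ * (m : ℝ) ^ (-v)) else 0)
      ≤ w/2 * T₁ + w⁻¹/2 * T₂ := by
    rw [hT₁def, hT₂def]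
    calc ∑ n ∈ Finset.Icc 1 N₁, ∑ m ∈ Finset.Icc 1 N₂,
        (if a * (m : ℤ) ≡ b * (n : ℤ) [ZMOD (c : ℤ)] then
          ‖lam₁ n‖ * (n : ℝ) ^ (-u) * (‖lam₂ m‖ * (m : ℝ) ^ (-v)) else 0)
        ≤ ∑ n ∈ Finset.Icc 1 N₁, ∑ m ∈ Finset.Icc 1 N₂,
          (w/2 * (if a * (m : ℤ) ≡ b * (n : ℤ) [ZMOD (c : ℤ)] then
              (‖lam₁ n‖ * (n:ℝ)^(-u))^2 else 0)
           + w⁻¹/2 * (if a * (m : ℤ) ≡ b * (n : ℤ) [ZMOD (c : ℤ)] then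
              (‖lam₂ m‖ * (m:ℝ)^(-v))^2 else 0)) := by
          apply Finset.sum_le_sum
          intro n _
          apply Finset.sum_le_sum
          intro m _
          split_ifs with h
          · exact key _ _
          · norm_num
      _ = _ := by
          simp only [Finset.sum_add_distrib, Finset.mul_sum]
  have hT₁le : T₁ ≤ Q₁ := by
    rw [hT₁def, hQ₁def]
    have inner : ∀ n ∈ Finset.Icc 1 N₁,
        ∑ m ∈ Finset.Icc 1 N₂, (if a * (m : ℤ) ≡ b * (n : ℤ) [ZMOD (c : ℤ)] then
          (‖lam₁ n‖ * (n:ℝ)^(-u))^2 else 0)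
        ≤ (Y/(c:ℝ)+1) * (‖lam₁ n‖ * (n:ℝ)^(-u))^2 := by
      intro n _
      have e : ∑ m ∈ Finset.Icc 1 N₂, (if a * (m : ℤ) ≡ b * (n : ℤ) [ZMOD (c : ℤ)] then
          (‖lam₁ n‖ * (n:ℝ)^(-u))^2 else 0)
          = (((Finset.Icc 1 N₂).filter
              (fun m : ℕ => a * (m:ℤ) ≡ b * (n:ℤ) [ZMOD (c:ℤ)])).card : ℝ)
            * (‖lam₁ n‖ * (n:ℝ)^(-u))^2 := by
        rw [← Finset.sum_filter, Finset.sum_const, nsmul_eq_mul]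
      rw [e]
      exact mul_le_mul_of_nonneg_right (hcnt₁ n) (sq_nonneg _)
    calc ∑ n ∈ Finset.Icc 1 N₁, ∑ m ∈ Finset.Icc 1 N₂,
        (if a * (m : ℤ) ≡ b * (n : ℤ) [ZMOD (c : ℤ)] then
          (‖lam₁ n‖ * (n:ℝ)^(-u))^2 else 0)
        ≤ ∑ n ∈ Finset.Icc 1 N₁, (Y/(c:ℝ)+1) * (‖lam₁ n‖ * (n:ℝ)^(-u))^2 :=
          Finset.sum_le_sum inner
      _ = (Y/(c:ℝ)+1) * ∑ n ∈ Finset.Icc 1 N₁, (‖lam₁ n‖ * (n:ℝ)^(-u))^2 :=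
          (Finset.mul_sum _ _ _).symm
      _ ≤ (Y/(c:ℝ)+1) * (X^(1-2*u) * (K*(1+Real.log X))) :=
          mul_le_mul_of_nonneg_left hsum1 hfr1.le
  have hT₂le : T₂ ≤ Q₂ := by
    rw [hT₂def, hQ₂def, Finset.sum_comm]
    have inner : ∀ m ∈ Finset.Icc 1 N₂,
        ∑ n ∈ Finset.Icc 1 N₁, (if a * (m : ℤ) ≡ b * (n : ℤ) [ZMOD (c : ℤ)] then
          (‖lam₂ m‖ * (m:ℝ)^(-v))^2 else 0)
        ≤ (X/(c:ℝ)+1) * (‖lam₂ m‖ * (m:ℝ)^(-v))^2 := by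
      intro m _
      have e : ∑ n ∈ Finset.Icc 1 N₁, (if a * (m : ℤ) ≡ b * (n : ℤ) [ZMOD (c : ℤ)] then
          (‖lam₂ m‖ * (m:ℝ)^(-v))^2 else 0)
          = (((Finset.Icc 1 N₁).filter
              (fun n : ℕ => a * (m:ℤ) ≡ b * (n:ℤ) [ZMOD (c:ℤ)])).card : ℝ)
            * (‖lam₂ m‖ * (m:ℝ)^(-v))^2 := by
        rw [← Finset.sum_filter, Finset.sum_const, nsmul_eq_mul]
      rw [e]
      exact mul_le_mul_of_nonneg_right (hcnt₂ m) (sq_nonneg _)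
    calc ∑ m ∈ Finset.Icc 1 N₂, ∑ n ∈ Finset.Icc 1 N₁,
        (if a * (m : ℤ) ≡ b * (n : ℤ) [ZMOD (c : ℤ)] then
          (‖lam₂ m‖ * (m:ℝ)^(-v))^2 else 0)
        ≤ ∑ m ∈ Finset.Icc 1 N₂, (X/(c:ℝ)+1) * (‖lam₂ m‖ * (m:ℝ)^(-v))^2 :=
          Finset.sum_le_sum inner
      _ = (X/(c:ℝ)+1) * ∑ m ∈ Finset.Icc 1 N₂, (‖lam₂ m‖ * (m:ℝ)^(-v))^2 :=
          (Finset.mul_sum _ _ _).symm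
      _ ≤ (X/(c:ℝ)+1) * (Y^(1-2*v) * (K*(1+Real.log Y))) :=
          mul_le_mul_of_nonneg_left hsum2 hfr2.le
  have step2 : w/2*T₁ + w⁻¹/2*T₂ ≤ w/2*Q₁ + w⁻¹/2*Q₂ := by
    have hw2 : (0:ℝ) ≤ w/2 := by linarith
    have hwi : (0:ℝ) ≤ w⁻¹/2 := by positivity
    have h1 := mul_le_mul_of_nonneg_left hT₁le hw2
    have h2 := mul_le_mul_of_nonneg_left hT₂le hwi
    linarith
  have step3 : w/2*Q₁ + w⁻¹/2*Q₂ = p*q := by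
    have e1 : Q₁ = p^2 := (Real.sq_sqrt hQ₁0.le).symm
    have e2 : Q₂ = q^2 := (Real.sq_sqrt hQ₂0.le).symm
    rw [e1, e2, hwdef]
    exact combine_pq p q hp0 hq0
  -- split the square roots
  have hsqX : Real.sqrt (X^(1-2*u)) = X^((1:ℝ)/2-u) := by
    rw [Real.sqrt_eq_rpow, ← Real.rpow_mul hX0.le,
      show (1-2*u)*((1:ℝ)/2) = 1/2-u by ring]
  have hsqY : Real.sqrt (Y^(1-2*v)) = Y^((1:ℝ)/2-v) := by
    rw [Real.sqrt_eq_rpow, ← Real.rpow_mul hY0.le,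
      show (1-2*v)*((1:ℝ)/2) = 1/2-v by ring]
  have hple : p ≤ (Real.sqrt (Y/(c:ℝ)) + 1) *
      (X^((1:ℝ)/2-u) * (Real.sqrt K * (1+Real.log X))) := by
    have hps : p = Real.sqrt (Y/(c:ℝ)+1) *
        (X^((1:ℝ)/2-u) * (Real.sqrt K * Real.sqrt (1+Real.log X))) := by
      rw [hpdef, hQ₁def, Real.sqrt_mul (by positivity), Real.sqrt_mul hXp.le,
        Real.sqrt_mul hK0, hsqX]
    rw [hps]
    have h1 : Real.sqrt (Y/(c:ℝ)+1) ≤ Real.sqrt (Y/(c:ℝ)) + 1 :=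
      sqrt_add_one_le _ (by positivity)
    have h2 : Real.sqrt (1+Real.log X) ≤ 1+Real.log X := sqrt_le_self' _ (by linarith)
    have h3 : X^((1:ℝ)/2-u) * (Real.sqrt K * Real.sqrt (1+Real.log X))
        ≤ X^((1:ℝ)/2-u) * (Real.sqrt K * (1+Real.log X)) := by
      apply mul_le_mul_of_nonneg_left _ (Real.rpow_nonneg hX0.le _)
      exact mul_le_mul_of_nonneg_left h2 (Real.sqrt_nonneg K)
    exact mul_le_mul h1 h3 (by positivity) (by positivity)
  have hqle : q ≤ (Real.sqrt (X/(c:ℝ)) + 1) *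
      (Y^((1:ℝ)/2-v) * (Real.sqrt K * (1+Real.log Y))) := by
    have hqs : q = Real.sqrt (X/(c:ℝ)+1) *
        (Y^((1:ℝ)/2-v) * (Real.sqrt K * Real.sqrt (1+Real.log Y))) := by
      rw [hqdef, hQ₂def, Real.sqrt_mul (by positivity), Real.sqrt_mul hYp.le,
        Real.sqrt_mul hK0, hsqY]
    rw [hqs]
    have h1 : Real.sqrt (X/(c:ℝ)+1) ≤ Real.sqrt (X/(c:ℝ)) + 1 :=
      sqrt_add_one_le _ (by positivity)
    have h2 : Real.sqrt (1+Real.log Y) ≤ 1+Real.log Y := sqrt_le_self' _ (by linarith)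
    have h3 : Y^((1:ℝ)/2-v) * (Real.sqrt K * Real.sqrt (1+Real.log Y))
        ≤ Y^((1:ℝ)/2-v) * (Real.sqrt K * (1+Real.log Y)) := by
      apply mul_le_mul_of_nonneg_left _ (Real.rpow_nonneg hY0.le _)
      exact mul_le_mul_of_nonneg_left h2 (Real.sqrt_nonneg K)
    exact mul_le_mul h1 h3 (by positivity) (by positivity)
  have hfin : p * q ≤ K * ((1+Real.log X)*(1+Real.log Y)) *
      (X^((1:ℝ)/2-u) * Y^((1:ℝ)/2-v) *
        ((Real.sqrt (X/(c:ℝ))+1)*(Real.sqrt (Y/(c:ℝ))+1))) := by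
    calc p * q ≤ ((Real.sqrt (Y/(c:ℝ)) + 1) *
          (X^((1:ℝ)/2-u) * (Real.sqrt K * (1+Real.log X)))) *
        ((Real.sqrt (X/(c:ℝ)) + 1) *
          (Y^((1:ℝ)/2-v) * (Real.sqrt K * (1+Real.log Y)))) :=
          mul_le_mul hple hqle hq0.le (by positivity)
      _ = K * ((1+Real.log X)*(1+Real.log Y)) *
          (X^((1:ℝ)/2-u) * Y^((1:ℝ)/2-v) *
            ((Real.sqrt (X/(c:ℝ))+1)*(Real.sqrt (Y/(c:ℝ))+1))) := by
          exact pack K (Real.sqrt K) (1+Real.log X) (1+Real.log Y)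
            (X^((1:ℝ)/2-u)) (Y^((1:ℝ)/2-v))
            (Real.sqrt (Y/(c:ℝ))) (Real.sqrt (X/(c:ℝ))) (Real.mul_self_sqrt hK0)
  refine le_trans step1 (le_trans step2 (le_trans (le_of_eq step3) (le_trans hfin ?_)))
  rw [final_id X Y (c:ℝ) u v hX0 hY0 hc0]
  have hrest : (0:ℝ) ≤ (1+Real.log X)*(1+Real.log Y) *
      ((X^(1-u) * Y^(1-v) / (c:ℝ)) *
        (1 + Real.sqrt ((c:ℝ)/X) + Real.sqrt ((c:ℝ)/Y) + (c:ℝ)/Real.sqrt (X*Y))) := by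
    apply mul_nonneg (by positivity)
    apply mul_nonneg
    · apply div_nonneg _ hc0.le
      exact mul_nonneg (Real.rpow_nonneg hX0.le _) (Real.rpow_nonneg hY0.le _)
    · positivity
  nlinarith [mul_nonneg hK0 hrest]
end
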